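/- Let G be a group, G' an abelian normal subgroup of G, n ≥ 1 a natural number, and a ∈ G such that a^n ∈ G' and every element of G can be written as a^i · g' with i ∈ ℤ and g' ∈ G'. Then for every element c of the commutator subgroup ⁅G, G⁆ of G, the ordered product ∏_{i=0}^{n−1} (a^i c a^{−i}) equals 1. (This is the identity [G,G]^Â = 1, where Â = 1 + a + ⋯ + a^{n−1} acts by conjugation.) -/

import Mathlib

open scoped IsMulCommutative commutatorElement

section Aux

variable {G : Type*} [Group G] (G' : Subgroup G) [G'.Normal] [IsMulCommutative G']

/-- Conjugation by `g : G` as a map `G' → G'`. -/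
def cgAux (g : G) (x : G') : G' :=
  ⟨g * x * g⁻¹, Subgroup.Normal.conj_mem ‹G'.Normal› x x.2 g⟩

lemma cgAux_mul (g : G) (x y : G') :
    cgAux G' g (x * y) = cgAux G' g x * cgAux G' g y := by
  ext; show g * ((x : G) * y) * g⁻¹ = g * x * g⁻¹ * (g * y * g⁻¹); group

lemma cgAux_inv (g : G) (x : G') : cgAux G' g x⁻¹ = (cgAux G' g x)⁻¹ := by
  ext; simp [cgAux]; group

lemma cgAux_cgAux (g h : G) (x : G') : cgAux G' g (cgAux G' h x) = cgAux G' (g * h) x := by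
  ext; simp [cgAux]; group

lemma cgAux_one (x : G') : cgAux G' 1 x = x := by
  ext; simp [cgAux]

lemma cgAux_coe (u x : G') : cgAux G' (u : G) x = x := by
  have h : (u : G) * x = x * u := congrArg Subtype.val (mul_comm u x)
  ext
  show (u : G) * x * (u : G)⁻¹ = x
  rw [h, mul_assoc, mul_inv_cancel, mul_one]

lemma cgAux_mem {g : G} (hg : g ∈ G') (x : G') : cgAux G' g x = x :=
  cgAux_coe G' ⟨g, hg⟩ x

/-- The map `x ↦ ∏_{i<n} a^i x a^{-i}` on `G'`. -/
def FnAux (n : ℕ) (a : G) (x : G') : G' :=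
  ∏ i ∈ Finset.range n, cgAux G' (a ^ i) x

lemma FnAux_mul (n : ℕ) (a : G) (x y : G') :
    FnAux G' n a (x * y) = FnAux G' n a x * FnAux G' n a y := by
  simp [FnAux, cgAux_mul, Finset.prod_mul_distrib]

lemma FnAux_inv (n : ℕ) (a : G) (x : G') :
    FnAux G' n a x⁻¹ = (FnAux G' n a x)⁻¹ := by
  simp [FnAux, cgAux_inv]

lemma FnAux_one (n : ℕ) (a : G) : FnAux G' n a 1 = 1 := by
  simpa using FnAux_mul G' n a 1 1

lemma FnAux_conj_a {n : ℕ} {a : G} (han : a ^ n ∈ G') (x : G') :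
    FnAux G' n a (cgAux G' a x) = FnAux G' n a x := by
  set f : ℕ → G' := fun i => cgAux G' (a ^ i) x with hf
  have hshift : ∀ i, cgAux G' (a ^ i) (cgAux G' a x) = f (i + 1) := by
    intro i
    rw [cgAux_cgAux, hf]
    simp [pow_succ, mul_comm]
  have h0 : f 0 = x := by simp [hf, cgAux_one]
  have hn : f n = x := cgAux_mem G' han x
  have key : (∏ i ∈ Finset.range n, f (i + 1)) * f 0 = (∏ i ∈ Finset.range n, f i) * f n := by
    rw [← Finset.prod_range_succ', Finset.prod_range_succ]
  rw [h0, hn] at key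
  have := mul_right_cancel key
  calc FnAux G' n a (cgAux G' a x) = ∏ i ∈ Finset.range n, f (i + 1) := by
        unfold FnAux; exact Finset.prod_congr rfl fun i _ => hshift i
    _ = ∏ i ∈ Finset.range n, f i := this
    _ = FnAux G' n a x := rfl

lemma FnAux_conj_zpow {n : ℕ} {a : G} (han : a ^ n ∈ G') (i : ℤ) (x : G') :
    FnAux G' n a (cgAux G' (a ^ i) x) = FnAux G' n a x := by
  induction i using Int.induction_on generalizing x with
  | zero => simp [cgAux_one]
  | succ k ih =>
      have : (a : G) ^ ((k : ℤ) + 1) = a ^ (k : ℤ) * a := by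
        rw [zpow_add_one]
      rw [this, ← cgAux_cgAux, ih, FnAux_conj_a G' han]
  | pred k ih =>
      have : (a : G) ^ (-(k : ℤ) - 1) = a ^ (-(k : ℤ)) * a⁻¹ := by
        rw [zpow_sub_one]
      rw [this, ← cgAux_cgAux, ih]
      have h2 : cgAux G' a (cgAux G' a⁻¹ x) = x := by
        rw [cgAux_cgAux, mul_inv_cancel, cgAux_one]
      conv_rhs => rw [← h2, FnAux_conj_a G' han]

lemma FnAux_commutator {n : ℕ} {a : G} (han : a ^ n ∈ G')
    (hgen : ∀ x : G, ∃ (i : ℤ) (g' : G), g' ∈ G' ∧ x = a ^ i * g')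
    (x y : G) (h : ⁅x, y⁆ ∈ G') :
    FnAux G' n a ⟨⁅x, y⁆, h⟩ = 1 := by
  obtain ⟨i, u, hu, rfl⟩ := hgen x
  obtain ⟨j, v, hv, rfl⟩ := hgen y
  set U : G' := ⟨u, hu⟩
  set V : G' := ⟨v, hv⟩
  have hdecomp : (⟨⁅a ^ i * u, a ^ j * v⁆, h⟩ : G') =
      cgAux G' (a ^ i) U * cgAux G' (a ^ (i + j)) V *
        cgAux G' (a ^ (i + j)) U⁻¹ * cgAux G' (a ^ j) V⁻¹ := by
    ext
    show ⁅a ^ i * u, a ^ j * v⁆ =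
      a ^ i * u * (a ^ i)⁻¹ * (a ^ (i + j) * v * (a ^ (i + j))⁻¹) *
        (a ^ (i + j) * u⁻¹ * (a ^ (i + j))⁻¹) * (a ^ j * v⁻¹ * (a ^ j)⁻¹)
    rw [commutatorElement_def]
    group
  rw [hdecomp, FnAux_mul, FnAux_mul, FnAux_mul,
    FnAux_conj_zpow G' han, FnAux_conj_zpow G' han, FnAux_conj_zpow G' han,
    FnAux_conj_zpow G' han, FnAux_inv, FnAux_inv]
  rw [mul_comm (FnAux G' n a U) (FnAux G' n a V)]
  group

end Aux

/-- **The identity `[G,G]^Â = 1`.**  If `G'` is an abelian normal subgroup of `G`,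
`n ≥ 1`, `a ∈ G` satisfies `a ^ n ∈ G'`, and every element of `G` is of the form
`a ^ i * g'` with `i : ℤ`, `g' ∈ G'`, then for every `c` in the commutator subgroup
`⁅G, G⁆` the ordered product `∏_{i=0}^{n-1} a^i c a^{-i}` equals `1`. -/
theorem stmt6 (G : Type*) [Group G] (G' : Subgroup G) [G'.Normal] [IsMulCommutative G']
    (n : ℕ) (hn : 1 ≤ n) (a : G) (han : a ^ n ∈ G')
    (hgen : ∀ x : G, ∃ (i : ℤ) (g' : G), g' ∈ G' ∧ x = a ^ i * g')
    (c : G) (hc : c ∈ commutator G) :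
    ((List.range n).map (fun i => a ^ i * c * (a ^ i)⁻¹)).prod = 1 := by
  -- the commutator subgroup is contained in `G'`
  have hle : commutator G ≤ G' := by
    rw [commutator_def, Subgroup.commutator_le]
    intro g₁ _ g₂ _
    obtain ⟨i, u, hu, rfl⟩ := hgen g₁
    obtain ⟨j, v, hv, rfl⟩ := hgen g₂
    rw [← QuotientGroup.eq_one_iff]
    show (QuotientGroup.mk' G') ⁅a ^ i * u, a ^ j * v⁆ = 1
    rw [map_commutatorElement (QuotientGroup.mk' G'),
      commutatorElement_eq_one_iff_commute]
    have hu1 : QuotientGroup.mk' G' u = 1 := (QuotientGroup.eq_one_iff u).2 hu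
    have hv1 : QuotientGroup.mk' G' v = 1 := (QuotientGroup.eq_one_iff v).2 hv
    rw [map_mul, map_mul, map_zpow, map_zpow, hu1, hv1, mul_one, mul_one]
    exact Commute.zpow_zpow_self _ _ _
  -- main claim via closure induction
  have main : ∀ x (hx : x ∈ commutator G), ∀ hx' : x ∈ G', FnAux G' n a ⟨x, hx'⟩ = 1 := by
    intro x hx
    rw [commutator_eq_closure] at hx
    induction hx using Subgroup.closure_induction with
    | mem z hz =>
        obtain ⟨g₁, g₂, rfl⟩ := hz
        intro hx'
        exact FnAux_commutator G' han hgen g₁ g₂ hx'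
    | one =>
        intro hx'
        exact FnAux_one G' n a
    | mul z w hz hw ihz ihw =>
        intro hx'
        have hz' : z ∈ G' := hle (by rw [commutator_eq_closure]; exact hz)
        have hw' : w ∈ G' := hle (by rw [commutator_eq_closure]; exact hw)
        have : (⟨z * w, hx'⟩ : G') = ⟨z, hz'⟩ * ⟨w, hw'⟩ := rfl
        rw [this, FnAux_mul, ihz hz', ihw hw', one_mul]
    | inv z hz ihz =>
        intro hx'
        have hz' : z ∈ G' := hle (by rw [commutator_eq_closure]; exact hz)
        have : (⟨z⁻¹, hx'⟩ : G') = (⟨z, hz'⟩ : G')⁻¹ := rfl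
        rw [this, FnAux_inv, ihz hz', inv_one]
  have hc' : c ∈ G' := hle hc
  have hF : FnAux G' n a ⟨c, hc'⟩ = 1 := main c hc hc'
  have hcoe : ((FnAux G' n a ⟨c, hc'⟩ : G') : G) = 1 := by rw [hF]; rfl
  -- relate the list product to the subgroup product
  have hlist : ∀ m : ℕ,
      ((List.range m).map (fun i => a ^ i * c * (a ^ i)⁻¹)).prod =
        ((∏ i ∈ Finset.range m, cgAux G' (a ^ i) ⟨c, hc'⟩ : G') : G) := by
    intro m
    induction m with
    | zero => simp
    | succ k ih =>
        rw [List.range_succ, List.map_append, List.prod_append, Finset.prod_range_succ]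
        simp [ih, cgAux]
  rw [hlist n]
  exact hcoe
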